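/- Let G be a weighted graph whose Markov kernel P satisfies ‖P‖ < 1, and let f : V → [0, ∞) be a vertex function such that g := limsup_n |f⁻¹([0,n])|^{1/n} < ∞ with g > 1. Then the random walk (X_n) started from any vertex satisfies liminf_n f(X_n)/n ≥ −2 log‖P‖ / log g almost surely. -/

import Mathlib

open scoped BigOperators Classical
open Filter MeasureTheory

variable {V : Type*}

/-- Vertex weight: sum of incident edge weights. -/
noncomputable def vtxWeight (w : V → V → ℝ) (v : V) : ℝ := ∑' u, w v u

/-- Volume of a finite vertex set. -/
noncomputable def vol (w : V → V → ℝ) (S : Finset V) : ℝ := ∑ v ∈ S, vtxWeight w v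

/-- Volume of the edge boundary of a finite vertex set. -/
noncomputable def bdry (w : V → V → ℝ) (S : Finset V) : ℝ :=
  ∑ v ∈ S, ∑' u, ((↑S : Set V)ᶜ).indicator (w v) u

/-- The `i`-isolation `Δ_i S = i|S| - |∂S|`. -/
noncomputable def isol (i : ℝ) (w : V → V → ℝ) (S : Finset V) : ℝ :=
  i * vol w S - bdry w S

/-- An `i`-isolated core: `Δ_i` strictly dominates `Δ_i` of every proper subset. -/
def IsCore (i : ℝ) (w : V → V → ℝ) (S : Finset V) : Prop :=
  ∀ A : Finset V, A ⊂ S → isol i w A < isol i w S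

/-- The union `A_i` of all `i`-isolated cores. -/
def coreUnion (i : ℝ) (w : V → V → ℝ) : Set V :=
  {v | ∃ S : Finset V, IsCore i w S ∧ v ∈ S}

/-- The underlying graph of a weighted graph: adjacency iff positive weight. -/
noncomputable def gra (w : V → V → ℝ) : SimpleGraph V :=
  SimpleGraph.fromRel (fun u v => 0 < w u v)

/-- A set of vertices is connected if its induced subgraph is connected. -/
def ConnSet (w : V → V → ℝ) (S : Set V) : Prop :=
  (SimpleGraph.induce S (gra w)).Connected

/-- `i`-anchored expansion: every vertex lies in only finitely many connected
finite vertex sets with positive `i`-isolation. -/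
def Anchored (i : ℝ) (w : V → V → ℝ) : Prop :=
  ∀ v : V, {S : Finset V | v ∈ S ∧ ConnSet w (↑S) ∧ 0 < isol i w S}.Finite

/-- An `i`-island: a connected component of `A_i`. -/
def IsIsland (i : ℝ) (w : V → V → ℝ) (C : Set V) : Prop :=
  C.Nonempty ∧ C ⊆ coreUnion i w ∧ ConnSet w C ∧
    ∀ C' : Set V, C ⊆ C' → C' ⊆ coreUnion i w → ConnSet w C' → C' = C

/-- Transition kernel of the random walk on the weighted graph. -/
noncomputable def markov (w : V → V → ℝ) (u v : V) : ℝ := w u v / vtxWeight w u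

/-- `n`-step transition kernel of a Markov kernel `p`. -/
noncomputable def kern (p : V → V → ℝ) : ℕ → V → V → ℝ
  | 0, x, y => if x = y then 1 else 0
  | n + 1, x, y => ∑' z, p x z * kern p n z y


open scoped ENNReal Topology

noncomputable def popE {V : Type*} (m' : V → V → ℝ≥0∞) (h : V → ℝ≥0∞) (x : V) : ℝ≥0∞ :=
  ∑' z, m' x z * h z

section CylSum
variable {V : Type*}

lemma popE_mono (m' : V → V → ℝ≥0∞) {h h' : V → ℝ≥0∞} (hh : ∀ v, h v ≤ h' v) (x : V) :
    popE m' h x ≤ popE m' h' x :=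
  ENNReal.tsum_le_tsum fun z => mul_le_mul_right (hh z) _

/-- Summing cylinder weights against a final-state functional gives the iterated operator. -/
lemma cyl_sum [Countable V] (m' : V → V → ℝ≥0∞) (F : V → ℝ≥0∞) :
    ∀ (n : ℕ) (x : V),
      ∑' γ : Fin (n + 1) → V,
        ((if γ 0 = x then (1 : ℝ≥0∞) else 0) *
            ∏ k : Fin n, m' (γ k.castSucc) (γ k.succ)) * F (γ (Fin.last n))
        = (popE m')^[n] F x := by
  intro n
  induction n with
  | zero =>
    intro x
    rw [tsum_eq_single (fun _ : Fin 1 => x) ?_]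
    · simp
    · intro γ hγ
      have : γ 0 ≠ x := fun h => hγ (funext fun i => by rw [Subsingleton.elim i 0, h])
      simp [this]
  | succ n IH =>
    intro x
    rw [← (Fin.consEquiv (fun _ : Fin (n + 2) => V)).tsum_eq, ENNReal.tsum_prod']
    have hterm : ∀ (z : V) (δ : Fin (n + 1) → V),
        ((if (Fin.consEquiv (fun _ : Fin (n + 2) => V)) (z, δ) 0 = x then (1 : ℝ≥0∞) else 0) *
            ∏ k : Fin (n+1), m' ((Fin.consEquiv (fun _ : Fin (n + 2) => V)) (z, δ) k.castSucc)
              ((Fin.consEquiv (fun _ : Fin (n + 2) => V)) (z, δ) k.succ)) *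
            F ((Fin.consEquiv (fun _ : Fin (n + 2) => V)) (z, δ) (Fin.last (n+1)))
        = if z = x then
            (m' z (δ 0) * ∏ k : Fin n, m' (δ k.castSucc) (δ k.succ)) * F (δ (Fin.last n))
          else 0 := by
      intro z δ
      have he : ∀ j, (Fin.consEquiv (fun _ : Fin (n + 2) => V)) (z, δ) j
          = (Fin.cons z δ : Fin (n+2) → V) j := fun j => rfl
      simp only [he]
      have hprod : ∏ k : Fin (n+1), m' ((Fin.cons z δ : Fin (n+2) → V) k.castSucc)
          ((Fin.cons z δ : Fin (n+2) → V) k.succ)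
          = m' z (δ 0) * ∏ k : Fin n, m' (δ k.castSucc) (δ k.succ) := by
        rw [Fin.prod_univ_succ]
        simp [← Fin.succ_castSucc]
      have hlast0 : Fin.last (n+1) = (Fin.last n).succ := rfl
      have hlast : (Fin.cons z δ : Fin (n+2) → V) (Fin.last (n+1)) = δ (Fin.last n) := by
        rw [hlast0, Fin.cons_succ]
      rw [hprod, hlast]
      simp only [Fin.cons_zero, ite_mul, one_mul, zero_mul]
    simp only [hterm]
    have step1 : ∀ z : V, (∑' δ : Fin (n+1) → V, if z = x then
            (m' z (δ 0) * ∏ k : Fin n, m' (δ k.castSucc) (δ k.succ)) * F (δ (Fin.last n)) else 0)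
        = if z = x then (∑' δ : Fin (n+1) → V,
            (m' z (δ 0) * ∏ k : Fin n, m' (δ k.castSucc) (δ k.succ)) * F (δ (Fin.last n))) else 0 := by
      intro z
      split_ifs with hz
      · rfl
      · exact tsum_zero
    rw [tsum_congr step1, tsum_eq_single x (fun z hz => if_neg hz), if_pos rfl]
    have hins : ∀ δ : Fin (n+1) → V,
        (m' x (δ 0) * ∏ k : Fin n, m' (δ k.castSucc) (δ k.succ)) * F (δ (Fin.last n))
        = ∑' z : V, m' x z * (((if δ 0 = z then (1:ℝ≥0∞) else 0) *
            ∏ k : Fin n, m' (δ k.castSucc) (δ k.succ)) * F (δ (Fin.last n))) := by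
      intro δ
      rw [tsum_eq_single (δ 0) (fun z hz => by simp [Ne.symm hz])]
      simp [mul_assoc]
    rw [tsum_congr hins, ENNReal.tsum_comm]
    have hfin : ∀ z : V, (∑' δ : Fin (n+1) → V, m' x z * (((if δ 0 = z then (1:ℝ≥0∞) else 0) *
            ∏ k : Fin n, m' (δ k.castSucc) (δ k.succ)) * F (δ (Fin.last n))))
        = m' x z * (popE m')^[n] F z := by
      intro z
      rw [ENNReal.tsum_mul_left, IH z]
    rw [tsum_congr hfin, Function.iterate_succ_apply']
    rfl


end CylSum

section S2Section
lemma S2aux (w : V → V → ℝ) (hsymm : ∀ u v, w u v = w v u) (hnn : ∀ u v, 0 ≤ w u v)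
    (hsum : ∀ v, Summable (w v)) (hpos : ∀ v, 0 < (∑' u, w v u))
    (φ : V → ℝ) (hφ0 : ∀ v, 0 ≤ φ v) (F : Finset V) (hsupp : ∀ v ∉ F, φ v = 0) :
    Summable (fun v => (∑' u, (w v u / (∑' z, w v z)) * φ u) ^ 2 * (∑' u, w v u)) := by
  set W : V → ℝ := fun v => ∑' u, w v u with hW
  have hWpos : ∀ v, 0 < W v := hpos
  set p : V → V → ℝ := fun v u => w v u / W v with hp
  have hp0 : ∀ v u, 0 ≤ p v u := fun v u => div_nonneg (hnn v u) (hWpos v).le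
  have hp1 : ∀ v u, p v u ≤ 1 := by
    intro v u
    rw [hp, div_le_one (hWpos v)]
    exact Summable.le_tsum (hsum v) u (fun b _ => hnn v b)
  have hPsum : ∀ v, (∑' u, p v u * φ u) = ∑ u ∈ F, p v u * φ u := by
    intro v
    exact tsum_eq_sum (fun b hb => by rw [hsupp b hb, mul_zero])
  set M : ℝ := ∑ u ∈ F, φ u with hM
  have hM0 : 0 ≤ M := Finset.sum_nonneg fun u _ => hφ0 u
  have hPle : ∀ v, (∑' u, p v u * φ u) ≤ M := by
    intro v
    rw [hPsum v, hM]
    exact Finset.sum_le_sum fun u _ => by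
      calc p v u * φ u ≤ 1 * φ u := mul_le_mul_of_nonneg_right (hp1 v u) (hφ0 u)
        _ = φ u := one_mul _
  have hP0 : ∀ v, 0 ≤ (∑' u, p v u * φ u) := by
    intro v
    rw [hPsum v]
    exact Finset.sum_nonneg fun u _ => mul_nonneg (hp0 v u) (hφ0 u)
  -- comparison function
  have hcomp : ∀ v, (∑' u, p v u * φ u) ^ 2 * W v ≤ M * ∑ u ∈ F, φ u * w v u := by
    intro v
    have h1 : (∑' u, p v u * φ u) ^ 2 ≤ M * (∑' u, p v u * φ u) := by
      rw [sq]
      exact mul_le_mul_of_nonneg_right (hPle v) (hP0 v)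
    calc (∑' u, p v u * φ u) ^ 2 * W v ≤ (M * (∑' u, p v u * φ u)) * W v :=
          mul_le_mul_of_nonneg_right h1 (hWpos v).le
      _ = M * ∑ u ∈ F, φ u * w v u := by
          rw [hPsum v, mul_assoc]
          congr 1
          rw [Finset.sum_mul]
          refine Finset.sum_congr rfl fun u _ => ?_
          have hv : W v ≠ 0 := (hWpos v).ne'
          simp only [hp]
          field_simp
  have hsumm : Summable (fun v => M * ∑ u ∈ F, φ u * w v u) := by
    refine Summable.mul_left M (summable_sum fun u _ => ?_)
    have : (fun v => φ u * w v u) = fun v => φ u * w u v := by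
      funext v; rw [hsymm v u]
    rw [this]
    exact (hsum u).mul_left _
  exact Summable.of_nonneg_of_le
    (fun v => mul_nonneg (sq_nonneg _) (hWpos v).le) hcomp hsumm


end S2Section
section Aux4
variable {V : Type*}

/-- The ENNReal transition kernel. -/
noncomputable def mE (w : V → V → ℝ) : V → V → ℝ≥0∞ := fun u v => ENNReal.ofReal (markov w u v)

/-- The ENNReal quadratic form. -/
noncomputable def normE (w : V → V → ℝ) (h : V → ℝ≥0∞) : ℝ≥0∞ :=
  ∑' v, (h v) ^ 2 * ENNReal.ofReal (vtxWeight w v)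

variable (w : V → V → ℝ) (hsymm : ∀ u v, w u v = w v u) (hnn : ∀ u v, 0 ≤ w u v)
  (hsum : ∀ v, Summable (w v)) (hpos : ∀ v, 0 < vtxWeight w v)
  (ρ : ℝ) (hρ0 : 0 < ρ)
  (hP : ∀ f : V → ℝ, (Function.support f).Finite →
      ∑' v, (∑' u, markov w v u * f u) ^ 2 * vtxWeight w v ≤
        ρ ^ 2 * ∑' v, (f v) ^ 2 * vtxWeight w v)

section S2dup

omit hρ0 hP in
include hsymm hnn hsum hpos in
lemma S2 (φ : V → ℝ) (hφ0 : ∀ v, 0 ≤ φ v) (F : Finset V) (hsupp : ∀ v ∉ F, φ v = 0) :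
    Summable (fun v => (∑' u, markov w v u * φ u) ^ 2 * vtxWeight w v) := by
  exact S2aux w hsymm hnn hsum hpos φ hφ0 F hsupp

end S2dup

include hsymm hnn hsum hpos hρ0 hP in
lemma normstep_fin (φ : V → ℝ) (hφ0 : ∀ v, 0 ≤ φ v) (F : Finset V) (hsupp : ∀ v ∉ F, φ v = 0) :
    ∑' v, (∑' u, mE w v u * ENNReal.ofReal (φ u)) ^ 2 * ENNReal.ofReal (vtxWeight w v)
      ≤ ENNReal.ofReal (ρ ^ 2) *
        ∑' v, (ENNReal.ofReal (φ v)) ^ 2 * ENNReal.ofReal (vtxWeight w v) := by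
  have hm0 : ∀ v u, 0 ≤ markov w v u := fun v u => div_nonneg (hnn v u) (hpos v).le
  have hPsumm : ∀ v, Summable (fun u => markov w v u * φ u) :=
    fun v => summable_of_ne_finset_zero (s := F) (fun b hb => by rw [hsupp b hb, mul_zero])
  have hPnn : ∀ v, 0 ≤ ∑' u, markov w v u * φ u :=
    fun v => tsum_nonneg fun u => mul_nonneg (hm0 v u) (hφ0 u)
  have bridge1 : ∀ v, ∑' u, mE w v u * ENNReal.ofReal (φ u)
      = ENNReal.ofReal (∑' u, markov w v u * φ u) := by
    intro v
    rw [ENNReal.ofReal_tsum_of_nonneg (fun u => mul_nonneg (hm0 v u) (hφ0 u)) (hPsumm v)]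
    exact tsum_congr fun u => (ENNReal.ofReal_mul (hm0 v u)).symm ▸ rfl
  calc ∑' v, (∑' u, mE w v u * ENNReal.ofReal (φ u)) ^ 2 * ENNReal.ofReal (vtxWeight w v)
      = ∑' v, ENNReal.ofReal ((∑' u, markov w v u * φ u) ^ 2 * vtxWeight w v) := by
        refine tsum_congr fun v => ?_
        rw [bridge1 v, ← ENNReal.ofReal_pow (hPnn v),
          ← ENNReal.ofReal_mul (pow_nonneg (hPnn v) 2)]
    _ = ENNReal.ofReal (∑' v, (∑' u, markov w v u * φ u) ^ 2 * vtxWeight w v) := by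
        rw [ENNReal.ofReal_tsum_of_nonneg
          (fun v => mul_nonneg (sq_nonneg _) (hpos v).le) (S2 w hsymm hnn hsum hpos φ hφ0 F hsupp)]
    _ ≤ ENNReal.ofReal (ρ ^ 2 * ∑' v, (φ v) ^ 2 * vtxWeight w v) := by
        refine ENNReal.ofReal_le_ofReal ?_
        refine hP φ ?_
        refine Set.Finite.subset F.finite_toSet ?_
        intro v hv
        by_contra hvF
        exact hv (hsupp v hvF)
    _ = ENNReal.ofReal (ρ ^ 2) *
        ∑' v, (ENNReal.ofReal (φ v)) ^ 2 * ENNReal.ofReal (vtxWeight w v) := by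
        rw [ENNReal.ofReal_mul (sq_nonneg ρ)]
        congr 1
        have hsq : Summable (fun v => (φ v) ^ 2 * vtxWeight w v) :=
          summable_of_ne_finset_zero (s := F)
            (fun b hb => by rw [hsupp b hb]; ring)
        rw [ENNReal.ofReal_tsum_of_nonneg
          (fun v => mul_nonneg (sq_nonneg _) (hpos v).le) hsq]
        refine tsum_congr fun v => ?_
        rw [ENNReal.ofReal_mul (sq_nonneg _), ENNReal.ofReal_pow (hφ0 v)]

end Aux4

section Aux5
variable {V : Type*}
variable (w : V → V → ℝ) (hsymm : ∀ u v, w u v = w v u) (hnn : ∀ u v, 0 ≤ w u v)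
  (hsum : ∀ v, Summable (w v)) (hpos : ∀ v, 0 < vtxWeight w v)
  (ρ : ℝ) (hρ0 : 0 < ρ)
  (hP : ∀ f : V → ℝ, (Function.support f).Finite →
      ∑' v, (∑' u, markov w v u * f u) ^ 2 * vtxWeight w v ≤
        ρ ^ 2 * ∑' v, (f v) ^ 2 * vtxWeight w v)

lemma ennreal_le_of_sq_le_sq {a b : ℝ≥0∞} (h : a ^ 2 ≤ b ^ 2) : a ≤ b := by
  by_contra hab
  push_neg at hab
  exact absurd h (not_le.mpr (ENNReal.pow_lt_pow_left two_ne_zero hab))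

lemma ennreal_sq_iSup_finset {α : Type*} (a : Finset α → ℝ≥0∞) (hmono : Monotone a) :
    (⨆ F : Finset α, a F) ^ 2 = ⨆ F : Finset α, a F ^ 2 := by
  apply le_antisymm
  · rw [sq, ENNReal.iSup_mul]
    refine iSup_le fun i => ?_
    rw [ENNReal.mul_iSup]
    refine iSup_le fun j => ?_
    refine le_iSup_of_le (i ∪ j) ?_
    rw [sq]
    exact mul_le_mul' (hmono Finset.subset_union_left) (hmono Finset.subset_union_right)
  · exact iSup_le fun F => pow_le_pow_left' (le_iSup a F) 2

lemma ennreal_tsum_iSup_finset_le {α β : Type*} (G : Finset α → β → ℝ≥0∞)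
    (hmono : Monotone G) :
    ∑' v, ⨆ F : Finset α, G F v ≤ ⨆ F : Finset α, ∑' v, G F v := by
  rw [ENNReal.tsum_eq_iSup_sum]
  refine iSup_le fun S => ?_
  have h1 : ∑ v ∈ S, ⨆ F : Finset α, G F v = ⨆ F : Finset α, ∑ v ∈ S, G F v := by
    refine ENNReal.finsetSum_iSup fun i j => ⟨i ∪ j, fun v => ?_⟩
    exact ⟨hmono Finset.subset_union_left v, hmono Finset.subset_union_right v⟩
  rw [h1]
  exact iSup_mono fun F => ENNReal.sum_le_tsum S

include hsymm hnn hsum hpos hρ0 hP in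
lemma normstep (h : V → ℝ≥0∞) :
    normE w (popE (mE w) h) ≤ ENNReal.ofReal (ρ ^ 2) * normE w h := by
  by_cases htop : normE w h = ⊤
  · rw [htop, ENNReal.mul_top (by simpa using (ENNReal.ofReal_pos.mpr (pow_pos hρ0 2)).ne')]
    exact le_top
  -- h is finite everywhere
  have hfin : ∀ v, h v ≠ ⊤ := by
    intro v hv
    apply htop
    have h1 : (h v) ^ 2 * ENNReal.ofReal (vtxWeight w v) = ⊤ := by
      rw [hv]
      rw [ENNReal.top_pow (by norm_num), ENNReal.top_mul
        (by simpa using (ENNReal.ofReal_pos.mpr (hpos v)).ne')]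
    exact eq_top_iff.mpr (h1 ▸ ENNReal.le_tsum v)
  classical
  set hF : Finset V → V → ℝ≥0∞ := fun F u => if u ∈ F then h u else 0 with hhF
  have hFmono : ∀ {F G : Finset V}, F ⊆ G → ∀ u, hF F u ≤ hF G u := by
    intro F G hFG u
    simp only [hhF]
    by_cases hu : u ∈ F
    · rw [if_pos hu, if_pos (hFG hu)]
    · rw [if_neg hu]; exact zero_le
  have hFle : ∀ F u, hF F u ≤ h u := by
    intro F u
    simp only [hhF]
    split_ifs
    · exact le_rfl
    · exact zero_le
  -- pointwise monotone convergence for the operator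
  have key1 : ∀ v, popE (mE w) h v = ⨆ F : Finset V, popE (mE w) (hF F) v := by
    intro v
    rw [popE, ENNReal.tsum_eq_iSup_sum]
    refine iSup_congr fun F => ?_
    rw [popE, tsum_eq_sum (s := F) (fun b hb => by simp [hhF, if_neg hb])]
    refine Finset.sum_congr rfl fun u hu => by simp [hhF, if_pos hu]
  -- the family of truncated quadratic forms
  have hGmono : Monotone (fun F : Finset V => fun v =>
      (popE (mE w) (hF F) v) ^ 2 * ENNReal.ofReal (vtxWeight w v)) := by
    intro F G hFG
    intro v
    dsimp only
    gcongr
    exact ENNReal.tsum_le_tsum fun u => mul_le_mul_right (hFmono hFG u) _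
  calc normE w (popE (mE w) h)
      = ∑' v, ⨆ F : Finset V, (popE (mE w) (hF F) v) ^ 2 * ENNReal.ofReal (vtxWeight w v) := by
        refine tsum_congr fun v => ?_
        rw [key1 v]
        have hmono2 : Monotone fun F : Finset V => popE (mE w) (hF F) v := by
          intro F G hFG
          exact ENNReal.tsum_le_tsum fun u => mul_le_mul_right (hFmono hFG u) _
        rw [ennreal_sq_iSup_finset (fun F : Finset V => popE (mE w) (hF F) v) hmono2,
          ENNReal.iSup_mul]
    _ ≤ ⨆ F : Finset V, ∑' v, (popE (mE w) (hF F) v) ^ 2 * ENNReal.ofReal (vtxWeight w v) :=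
        ennreal_tsum_iSup_finset_le _ hGmono
    _ ≤ ENNReal.ofReal (ρ ^ 2) * normE w h := by
        refine iSup_le fun F => ?_
        have hφ : ∀ u, hF F u = ENNReal.ofReal ((hF F u).toReal) := by
          intro u
          rw [ENNReal.ofReal_toReal]
          simp only [hhF]
          split_ifs
          · exact hfin u
          · exact ENNReal.zero_ne_top
        have h1 : ∑' v, (popE (mE w) (hF F) v) ^ 2 * ENNReal.ofReal (vtxWeight w v)
            ≤ ENNReal.ofReal (ρ ^ 2) *
              ∑' v, (ENNReal.ofReal ((hF F v).toReal)) ^ 2 * ENNReal.ofReal (vtxWeight w v) := by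
          have := normstep_fin w hsymm hnn hsum hpos ρ hρ0 hP
            (fun u => (hF F u).toReal) (fun u => ENNReal.toReal_nonneg) F
            (fun v hv => by simp [hhF, if_neg hv])
          refine le_trans (le_of_eq ?_) this
          refine tsum_congr fun v => ?_
          congr 1
          congr 1
          simp only [popE]
          exact tsum_congr fun u => by rw [← hφ u]
        refine h1.trans ?_
        gcongr
        refine ENNReal.tsum_le_tsum fun v => ?_
        gcongr
        rw [← hφ v]
        exact hFle F v

include hsymm hnn hsum hpos hρ0 hP in
lemma iter_norm (h : V → ℝ≥0∞) (n : ℕ) :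
    normE w ((popE (mE w))^[n] h) ≤ (ENNReal.ofReal (ρ ^ 2)) ^ n * normE w h := by
  induction n with
  | zero => simp
  | succ n IH =>
    rw [Function.iterate_succ_apply']
    calc normE w (popE (mE w) ((popE (mE w))^[n] h))
        ≤ ENNReal.ofReal (ρ ^ 2) * normE w ((popE (mE w))^[n] h) :=
          normstep w hsymm hnn hsum hpos ρ hρ0 hP _
      _ ≤ ENNReal.ofReal (ρ ^ 2) * ((ENNReal.ofReal (ρ ^ 2)) ^ n * normE w h) := by gcongr
      _ = (ENNReal.ofReal (ρ ^ 2)) ^ (n + 1) * normE w h := by ring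

end Aux5

section Aux6
variable {V : Type*} [MeasurableSpace V]
variable (w : V → V → ℝ) (hsymm : ∀ u v, w u v = w v u) (hnn : ∀ u v, 0 ≤ w u v)
  (hsum : ∀ v, Summable (w v)) (hpos : ∀ v, 0 < vtxWeight w v)
  (ρ : ℝ) (hρ0 : 0 < ρ)
  (hP : ∀ f : V → ℝ, (Function.support f).Finite →
      ∑' v, (∑' u, markov w v u * f u) ^ 2 * vtxWeight w v ≤
        ρ ^ 2 * ∑' v, (f v) ^ 2 * vtxWeight w v)
  (x₀ : V) (μ : Measure (ℕ → V))
  (hμ : ∀ (n : ℕ) (γ : ℕ → V),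
      μ {ω | ∀ k ≤ n, ω k = γ k} =
        ENNReal.ofReal ((if γ 0 = x₀ then (1 : ℝ) else 0) *
          ∏ k ∈ Finset.range n, markov w (γ k) (γ (k + 1))))

include hsymm hnn hsum hpos hρ0 hP hμ in
lemma walk_in_set_bound [Countable V] (A : Set V)
    (hA : Summable (Set.indicator A (vtxWeight w))) (n : ℕ) :
    μ {ω | ω n ∈ A} ≤ ENNReal.ofReal (ρ ^ n *
      Real.sqrt ((∑' v, Set.indicator A (vtxWeight w) v) / vtxWeight w x₀)) := by
  classical
  have hm0 : ∀ v u, 0 ≤ markov w v u := fun v u => div_nonneg (hnn v u) (hpos v).le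
  set VolA : ℝ := ∑' v, Set.indicator A (vtxWeight w) v with hVolA
  have hVolA0 : 0 ≤ VolA :=
    tsum_nonneg fun v => Set.indicator_nonneg (fun u _ => (hpos u).le) v
  set W0 : ℝ := vtxWeight w x₀ with hW0
  have hW0pos : 0 < W0 := hpos x₀
  set cylW : (Fin (n+1) → V) → ℝ≥0∞ := fun γ =>
    ((if γ 0 = x₀ then (1:ℝ≥0∞) else 0) *
      ∏ k : Fin n, ENNReal.ofReal (markov w (γ k.castSucc) (γ k.succ))) with hcylW
  set ext : (Fin (n+1) → V) → ℕ → V :=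
    fun γ k => if h : k < n+1 then γ ⟨k, h⟩ else x₀ with hext
  have hcyl : ∀ γ : Fin (n+1) → V, μ {ω | ∀ k ≤ n, ω k = ext γ k} = cylW γ := by
    intro γ
    rw [hμ n (ext γ)]
    have h0 : ext γ 0 = γ 0 := by simp [hext]
    have hnth : ∏ k ∈ Finset.range n, markov w (ext γ k) (ext γ (k+1))
        = ∏ k : Fin n, markov w (γ k.castSucc) (γ k.succ) := by
      rw [← Fin.prod_univ_eq_prod_range]
      refine Finset.prod_congr rfl fun k _ => ?_
      have e1 : ext γ (k : ℕ) = γ k.castSucc := by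
        simp only [hext]
        rw [dif_pos (lt_of_lt_of_le k.2 (Nat.le_succ n))]
        congr 1
      have e2 : ext γ ((k : ℕ) + 1) = γ k.succ := by
        simp only [hext]
        rw [dif_pos (Nat.succ_lt_succ k.2)]
        congr 1
      rw [e1, e2]
    rw [h0, hnth, ENNReal.ofReal_mul (by split_ifs <;> norm_num),
      ENNReal.ofReal_prod_of_nonneg (fun i _ => hm0 _ _), hcylW]
    congr 1
    split_ifs <;> simp
  have hcover : {ω : ℕ → V | ω n ∈ A} ⊆
      ⋃ γ : {γ : Fin (n+1) → V // γ (Fin.last n) ∈ A}, {ω | ∀ k ≤ n, ω k = ext γ.1 k} := by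
    intro ω hω
    refine Set.mem_iUnion.mpr ⟨⟨fun i => ω (i : ℕ), by simpa using hω⟩, ?_⟩
    intro k hk
    simp [hext, Nat.lt_succ_of_le hk]
    exact fun h => absurd hk (not_le.mpr h)
  have h1 : μ {ω | ω n ∈ A} ≤
      ∑' γ : {γ : Fin (n+1) → V // γ (Fin.last n) ∈ A}, cylW γ.1 := by
    refine (measure_mono hcover).trans ((measure_iUnion_le _).trans (le_of_eq ?_))
    exact tsum_congr fun γ => hcyl γ.1
  have h2 : (∑' γ : {γ : Fin (n+1) → V // γ (Fin.last n) ∈ A}, cylW γ.1)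
      = (popE (mE w))^[n] (A.indicator fun _ => (1:ℝ≥0∞)) x₀ := by
    have ht := tsum_subtype {γ : Fin (n+1) → V | γ (Fin.last n) ∈ A} cylW
    refine ht.trans ?_
    rw [← cyl_sum (mE w) (A.indicator fun _ => (1:ℝ≥0∞)) n x₀]
    refine tsum_congr fun γ => ?_
    by_cases hγ : γ (Fin.last n) ∈ A
    · rw [Set.indicator_of_mem (show γ ∈ {γ : Fin (n+1) → V | γ (Fin.last n) ∈ A} from hγ),
        Set.indicator_of_mem hγ, mul_one]
      simp only [hcylW, mE]
    · rw [Set.indicator_of_notMem (show γ ∉ {γ : Fin (n+1) → V | γ (Fin.last n) ∈ A} from hγ),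
        Set.indicator_of_notMem hγ, mul_zero]
  set H : V → ℝ≥0∞ := (popE (mE w))^[n] (A.indicator fun _ => (1:ℝ≥0∞)) with hH
  have norm0 : normE w (A.indicator fun _ => (1:ℝ≥0∞)) = ENNReal.ofReal VolA := by
    rw [normE, hVolA, ENNReal.ofReal_tsum_of_nonneg
      (fun v => Set.indicator_nonneg (fun u _ => (hpos u).le) v) hA]
    refine tsum_congr fun v => ?_
    by_cases hv : v ∈ A
    · rw [Set.indicator_of_mem hv, Set.indicator_of_mem hv]
      simp
    · rw [Set.indicator_of_notMem hv, Set.indicator_of_notMem hv]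
      simp
  have normn : normE w H ≤ (ENNReal.ofReal (ρ ^ 2)) ^ n * ENNReal.ofReal VolA := by
    rw [hH, ← norm0]
    exact iter_norm w hsymm hnn hsum hpos ρ hρ0 hP _ n
  have hpoint : (H x₀) ^ 2 * ENNReal.ofReal W0 ≤ normE w H := by
    rw [normE]
    exact ENNReal.le_tsum x₀
  set b : ℝ≥0∞ := ENNReal.ofReal (ρ ^ n * Real.sqrt (VolA / W0)) with hb
  have hbsq : b ^ 2 * ENNReal.ofReal W0 = (ENNReal.ofReal (ρ ^ 2)) ^ n * ENNReal.ofReal VolA := by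
    rw [hb, ← ENNReal.ofReal_pow (mul_nonneg (pow_nonneg hρ0.le n) (Real.sqrt_nonneg _)),
      ← ENNReal.ofReal_mul (pow_nonneg (mul_nonneg (pow_nonneg hρ0.le n) (Real.sqrt_nonneg _)) 2),
      ← ENNReal.ofReal_pow (sq_nonneg ρ),
      ← ENNReal.ofReal_mul (pow_nonneg (sq_nonneg ρ) n)]
    congr 1
    rw [mul_pow, Real.sq_sqrt (div_nonneg hVolA0 hW0pos.le)]
    have hW0ne : W0 ≠ 0 := hW0pos.ne'
    rw [mul_assoc, div_mul_cancel₀ _ hW0ne]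
    ring
  have hsq : (H x₀) ^ 2 ≤ b ^ 2 := by
    rw [← ENNReal.mul_le_mul_iff_left (c := ENNReal.ofReal W0)
      (by simpa using (ENNReal.ofReal_pos.mpr hW0pos).ne') ENNReal.ofReal_ne_top]
    exact hpoint.trans (normn.trans (le_of_eq hbsq.symm))
  calc μ {ω | ω n ∈ A} ≤ ∑' γ : {γ : Fin (n+1) → V // γ (Fin.last n) ∈ A}, cylW γ.1 := h1
    _ = H x₀ := h2
    _ ≤ b := ennreal_le_of_sq_le_sq hsq

end Aux6

theorem speed_from_norm {V : Type*} [MeasurableSpace V] (w : V → V → ℝ)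
    (hsymm : ∀ u v, w u v = w v u) (hnn : ∀ u v, 0 ≤ w u v)
    (hsum : ∀ v, Summable (w v)) (hpos : ∀ v, 0 < vtxWeight w v)
    (ρ : ℝ) (hρ0 : 0 < ρ) (hρ1 : ρ < 1)
    -- `‖P‖ ≤ ρ < 1` in quadratic-form formulation
    (hP : ∀ f : V → ℝ, (Function.support f).Finite →
      ∑' v, (∑' u, markov w v u * f u) ^ 2 * vtxWeight w v ≤
        ρ ^ 2 * ∑' v, (f v) ^ 2 * vtxWeight w v)
    (f : V → ℝ) (hf : ∀ v, 0 ≤ f v)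
    (g : ℝ) (hg : 1 < g)
    -- `g = limsup |f⁻¹([0,n])|^{1/n}`
    (hgrow : Filter.limsup
      (fun n : ℕ =>
        (∑' v : V, Set.indicator {u | f u ≤ n} (vtxWeight w) v) ^ ((n : ℝ)⁻¹))
      Filter.atTop = g)
    (x₀ : V) (μ : Measure (ℕ → V)) (hprob : IsProbabilityMeasure μ)
    -- `μ` is the law of the random walk started at `x₀`
    (hμ : ∀ (n : ℕ) (γ : ℕ → V),
      μ {ω | ∀ k ≤ n, ω k = γ k} =
        ENNReal.ofReal ((if γ 0 = x₀ then (1 : ℝ) else 0) *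
          ∏ k ∈ Finset.range n, markov w (γ k) (γ (k + 1)))) :
    ∀ᵐ ω ∂μ,
      ENNReal.ofReal (-2 * Real.log ρ / Real.log g) ≤
        Filter.liminf (fun n : ℕ => ENNReal.ofReal (f (ω n) / n)) Filter.atTop := by
  classical
  set term : ℕ → ℝ := fun n =>
    (∑' v : V, Set.indicator {u | f u ≤ (n : ℝ)} (vtxWeight w) v) ^ ((n : ℝ)⁻¹) with hterm
  -- every sublevel set has summable volume
  have hlevel : ∀ c : ℝ, Summable (Set.indicator {u | f u ≤ c} (vtxWeight w)) := by
    intro c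
    by_contra hns
    have hmono : ∀ n : ℕ, c ≤ (n : ℝ) → ¬ Summable (Set.indicator {u | f u ≤ (n : ℝ)} (vtxWeight w)) := by
      intro n hcn hsummable
      apply hns
      refine Summable.of_nonneg_of_le
        (fun v => Set.indicator_nonneg (fun u _ => (hpos u).le) v) (fun v => ?_) hsummable
      exact Set.indicator_le_indicator_of_subset
        (fun u hu => le_trans hu hcn) (fun u => (hpos u).le) v
    have hev : ∀ᶠ n : ℕ in atTop, term n = 0 := by
      filter_upwards [eventually_ge_atTop (max ⌈c⌉₊ 1)] with n hn
      have hn1 : 1 ≤ n := le_trans (le_max_right _ _) hn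
      have hcn : c ≤ (n : ℝ) :=
        le_trans (Nat.le_ceil c) (by exact_mod_cast le_trans (le_max_left _ _) hn)
      rw [hterm]
      simp only
      rw [tsum_eq_zero_of_not_summable (hmono n hcn)]
      exact Real.zero_rpow (by positivity)
    have : limsup term atTop = 0 := by
      rw [Filter.limsup_congr hev]
      exact Filter.limsup_const 0
    rw [hgrow] at this
    linarith
  -- V is countable
  have hVcount : Countable V := by
    have hSn : ∀ n : ℕ, {u : V | f u ≤ (n : ℝ)}.Countable := by
      intro n
      refine Set.Countable.mono (fun u hu => ?_) ((hlevel (n : ℝ)).countable_support)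
      have : Set.indicator {u : V | f u ≤ (n : ℝ)} (vtxWeight w) u = vtxWeight w u :=
        Set.indicator_of_mem hu _
      simp only [Function.mem_support, this]
      exact (hpos u).ne'
    have huniv : (Set.univ : Set V) = ⋃ n : ℕ, {u : V | f u ≤ (n : ℝ)} := by
      ext v
      simp only [Set.mem_univ, Set.mem_iUnion, true_iff, Set.mem_setOf_eq]
      exact ⟨⌈f v⌉₊, Nat.le_ceil _⟩
    have := Set.countable_iUnion hSn
    rw [← huniv] at this
    exact Set.countable_univ_iff.mp this
  have _ : Countable V := hVcount
  -- term is bounded above eventually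
  have hbdd : IsBoundedUnder (· ≤ ·) atTop term := by
    by_contra hb
    have hempty : {a : ℝ | ∀ᶠ n : ℕ in atTop, term n ≤ a} = ∅ := by
      ext a
      simp only [Set.mem_setOf_eq, Set.mem_empty_iff_false, iff_false]
      intro ha
      exact hb ⟨a, by rwa [Filter.eventually_map]⟩
    have : limsup term atTop = 0 := by
      rw [Filter.limsup_eq, hempty, Real.sInf_empty]
    rw [hgrow] at this
    linarith
  -- main body continues
  have hgb : limsup term atTop = g := hgrow
  set c : ℝ := -2 * Real.log ρ / Real.log g with hc
  have hlogρ : Real.log ρ < 0 := Real.log_neg hρ0 hρ1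
  have hlogg : 0 < Real.log g := Real.log_pos hg
  have hcpos : 0 < c := div_pos (by linarith) hlogg
  have key : ∀ ε : ℝ, 0 < ε → ε < c →
      ∀ᵐ ω ∂μ, ∀ᶠ n : ℕ in atTop, ¬ f (ω n) ≤ ε * n := by
    intro ε hε0 hεc
    set g' : ℝ := Real.exp ((Real.log g + (-2 * Real.log ρ) / ε) / 2) with hg'
    have hεlogg : ε * Real.log g < -2 * Real.log ρ := by
      have h1 := (lt_div_iff₀ hlogg).mp hεc
      linarith
    have hlogg' : Real.log g' = (Real.log g + (-2 * Real.log ρ) / ε) / 2 := Real.log_exp _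
    have hg'pos : 0 < g' := Real.exp_pos _
    have hgg' : g < g' := by
      rw [show g = Real.exp (Real.log g) from (Real.exp_log (by linarith)).symm, hg']
      apply Real.exp_lt_exp.mpr
      have h2 : Real.log g < (-2 * Real.log ρ) / ε := (lt_div_iff₀ hε0).mpr (by linarith)
      linarith
    have hg'1 : 1 < g' := lt_trans hg hgg'
    have hεlogg' : ε * Real.log g' < -2 * Real.log ρ := by
      rw [hlogg']
      have h3 : ε * ((Real.log g + (-2 * Real.log ρ) / ε) / 2)
          = (ε * Real.log g + (-2 * Real.log ρ)) / 2 := by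
        field_simp
      rw [h3]
      linarith
    set r : ℝ := ρ * g' ^ (ε / 2) with hr
    have hrpos : 0 < r := mul_pos hρ0 (Real.rpow_pos_of_pos hg'pos _)
    have hr1 : r < 1 := by
      have hlogr : Real.log r < 0 := by
        rw [hr, Real.log_mul hρ0.ne' (Real.rpow_pos_of_pos hg'pos _).ne',
          Real.log_rpow hg'pos]
        have h4 : ε / 2 * Real.log g' = ε * Real.log g' / 2 := by ring
        rw [h4]
        linarith
      exact (Real.log_neg_iff hrpos).mp hlogr
    have hvol1 : ∀ᶠ m : ℕ in atTop,
        (∑' v : V, Set.indicator {u | f u ≤ (m : ℝ)} (vtxWeight w) v) ≤ g' ^ (m : ℝ) := by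
      have hev := Filter.eventually_lt_of_limsup_lt (by rw [hgb]; exact hgg') hbdd
      filter_upwards [hev, eventually_ge_atTop 1] with m hm hm1
      set Vm := ∑' v : V, Set.indicator {u | f u ≤ (m : ℝ)} (vtxWeight w) v with hVm
      have hVm0 : 0 ≤ Vm := tsum_nonneg fun v => Set.indicator_nonneg (fun u _ => (hpos u).le) v
      have hmne : ((m : ℝ)) ≠ 0 := (Nat.cast_pos.mpr hm1).ne'
      have hVeq : Vm = (Vm ^ ((m : ℝ)⁻¹)) ^ (m : ℝ) := by
        rw [← Real.rpow_mul hVm0, inv_mul_cancel₀ hmne, Real.rpow_one]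
      calc Vm = (Vm ^ ((m : ℝ)⁻¹)) ^ (m : ℝ) := hVeq
        _ ≤ g' ^ (m : ℝ) := by
            apply Real.rpow_le_rpow (Real.rpow_nonneg hVm0 _) hm.le (by positivity)
    obtain ⟨N₁, hN₁⟩ := eventually_atTop.mp hvol1
    set C : ℝ := g' ^ ((1:ℝ)/2) / Real.sqrt (vtxWeight w x₀) with hC
    have hC0 : 0 ≤ C := by
      rw [hC]
      positivity
    have hμbound : ∀ᶠ n : ℕ in atTop,
        μ {ω : ℕ → V | f (ω n) ≤ ε * n} ≤ ENNReal.ofReal C * ENNReal.ofReal r ^ n := by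
      have htend : Tendsto (fun n : ℕ => ε * (n:ℝ)) atTop atTop :=
        Tendsto.const_mul_atTop hε0 tendsto_natCast_atTop_atTop
      filter_upwards [htend.eventually_ge_atTop (N₁ : ℝ)] with n hn
      set An : Set V := {u | f u ≤ ε * n} with hAn
      have hb := walk_in_set_bound w hsymm hnn hsum hpos ρ hρ0 hP x₀ μ hμ An (hlevel _) n
      refine le_trans hb ?_
      set m := ⌈ε * (n:ℝ)⌉₊ with hm
      have hεn0 : 0 ≤ ε * (n:ℝ) := by positivity
      have hm1 : (N₁ : ℝ) ≤ (m : ℝ) := le_trans hn (Nat.le_ceil _)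
      have hmN₁ : N₁ ≤ m := by exact_mod_cast hm1
      have hVle : (∑' v, Set.indicator An (vtxWeight w) v) ≤ g' ^ ((m : ℝ)) := by
        refine le_trans ?_ (hN₁ m hmN₁)
        refine Summable.tsum_le_tsum (fun v => ?_) (hlevel _) (hlevel _)
        have hsub : An ⊆ {u : V | f u ≤ (m:ℝ)} := by
          intro u hu
          simp only [hAn, Set.mem_setOf_eq] at hu ⊢
          exact le_trans hu (Nat.le_ceil _)
        exact Set.indicator_le_indicator_of_subset hsub (fun u => (hpos u).le) v
      have hVle2 : (∑' v, Set.indicator An (vtxWeight w) v) ≤ g' ^ (ε * n + 1) :=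
        le_trans hVle (Real.rpow_le_rpow_of_exponent_le hg'1.le
          (le_of_lt (Nat.ceil_lt_add_one hεn0)))
      have hE : ρ ^ n * Real.sqrt (g' ^ (ε * n + 1) / vtxWeight w x₀) = C * r ^ n := by
        have e1 : Real.sqrt (g' ^ (ε * n + 1)) = g' ^ ((ε/2) * (n:ℝ)) * g' ^ ((1:ℝ)/2) := by
          rw [Real.sqrt_eq_rpow, ← Real.rpow_mul hg'pos.le, ← Real.rpow_add hg'pos]
          congr 1
          ring
        have e2 : g' ^ ((ε/2) * (n:ℝ)) = (g' ^ (ε/2)) ^ (n:ℕ) := by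
          rw [Real.rpow_mul hg'pos.le, Real.rpow_natCast]
        rw [Real.sqrt_div (Real.rpow_nonneg hg'pos.le _), e1, e2, hC, hr, mul_pow]
        ring
      have hreal : ρ ^ n * Real.sqrt ((∑' v, Set.indicator An (vtxWeight w) v) / vtxWeight w x₀)
          ≤ C * r ^ n := by
        rw [← hE]
        have hs : Real.sqrt ((∑' v, Set.indicator An (vtxWeight w) v) / vtxWeight w x₀)
            ≤ Real.sqrt (g' ^ (ε * n + 1) / vtxWeight w x₀) := by
          apply Real.sqrt_le_sqrt
          gcongr
          exact (hpos x₀).le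
        exact mul_le_mul_of_nonneg_left hs (pow_nonneg hρ0.le n)
      calc ENNReal.ofReal (ρ ^ n * Real.sqrt
              ((∑' v, Set.indicator An (vtxWeight w) v) / vtxWeight w x₀))
          ≤ ENNReal.ofReal (C * r ^ n) := ENNReal.ofReal_le_ofReal hreal
        _ = ENNReal.ofReal C * ENNReal.ofReal r ^ n := by
            rw [ENNReal.ofReal_mul hC0, ENNReal.ofReal_pow hrpos.le]
    have hsumμ : (∑' n : ℕ, μ {ω : ℕ → V | f (ω n) ≤ ε * n}) ≠ ⊤ := by
      obtain ⟨N, hN⟩ := eventually_atTop.mp hμbound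
      have hle : ∀ n : ℕ, μ {ω : ℕ → V | f (ω n) ≤ ε * n}
          ≤ (if n < N then 1 else 0) + ENNReal.ofReal C * ENNReal.ofReal r ^ n := by
        intro n
        by_cases hn : n < N
        · rw [if_pos hn]
          exact le_trans prob_le_one (le_add_right le_rfl)
        · rw [if_neg hn, zero_add]
          exact hN n (not_lt.mp hn)
      refine ne_top_of_le_ne_top ?_ (ENNReal.tsum_le_tsum hle)
      rw [ENNReal.tsum_add]
      apply ENNReal.add_ne_top.mpr
      constructor
      · rw [tsum_eq_sum (s := Finset.range N)
          (fun n hn => if_neg (by simpa using hn))]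
        have hone : ∀ n ∈ Finset.range N, (if n < N then (1:ℝ≥0∞) else 0) = 1 :=
          fun n hn => if_pos (Finset.mem_range.mp hn)
        rw [Finset.sum_congr rfl hone, Finset.sum_const, nsmul_eq_mul, mul_one,
          Finset.card_range]
        exact ENNReal.natCast_ne_top N
      · rw [ENNReal.tsum_mul_left, ENNReal.tsum_geometric]
        refine ENNReal.mul_ne_top ENNReal.ofReal_ne_top ?_
        rw [Ne, ENNReal.inv_eq_top]
        intro h0
        have h5 : (1:ℝ≥0∞) ≤ ENNReal.ofReal r := tsub_eq_zero_iff_le.mp h0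
        exact absurd h5 (not_le.mpr (ENNReal.ofReal_lt_one.mpr hr1))
    have hBC := MeasureTheory.ae_finite_setOf_mem
      (μ := μ) (s := fun n : ℕ => {ω : ℕ → V | f (ω n) ≤ ε * n}) hsumμ
    filter_upwards [hBC] with ω hω
    have h1 : {n : ℕ | f (ω n) ≤ ε * n}ᶜ ∈ Filter.cofinite := by
      rw [Filter.mem_cofinite, compl_compl]
      exact hω
    rw [Nat.cofinite_eq_atTop] at h1
    exact h1
  -- epsilon sequence converging to c
  set εs : ℕ → ℝ := fun k => c - c / (k + 2) with hεs
  have hdivpos : ∀ k : ℕ, 0 < c / ((k:ℝ) + 2) := by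
    intro k
    apply div_pos hcpos
    positivity
  have hεs0 : ∀ k, 0 < εs k := by
    intro k
    have h2 : c / ((k:ℝ) + 2) < c := by
      apply div_lt_self hcpos
      have := Nat.cast_nonneg (α := ℝ) k
      linarith
    simp only [hεs]
    linarith
  have hεsc : ∀ k, εs k < c := by
    intro k
    have := hdivpos k
    simp only [hεs]
    linarith
  have hae := (MeasureTheory.ae_all_iff).mpr (fun k : ℕ => key (εs k) (hεs0 k) (hεsc k))
  filter_upwards [hae] with ω hω
  have hk : ∀ k : ℕ, ENNReal.ofReal (εs k)
      ≤ liminf (fun n : ℕ => ENNReal.ofReal (f (ω n) / n)) atTop := by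
    intro k
    refine Filter.le_liminf_of_le (by isBoundedDefault) ?_
    filter_upwards [hω k, eventually_ge_atTop 1] with n hn h1
    have hnpos : (0:ℝ) < n := by exact_mod_cast h1
    apply ENNReal.ofReal_le_ofReal
    rw [le_div_iff₀ hnpos]
    push_neg at hn
    exact hn.le
  have htend : Tendsto (fun k : ℕ => ENNReal.ofReal (εs k)) atTop
      (𝓝 (ENNReal.ofReal c)) := by
    apply ENNReal.tendsto_ofReal
    have h6 : Tendsto (fun k : ℕ => c / ((k:ℝ) + 2)) atTop (𝓝 0) := by
      apply Tendsto.div_atTop tendsto_const_nhds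
      exact tendsto_atTop_add_const_right atTop 2 tendsto_natCast_atTop_atTop
    have h7 : Tendsto (fun k : ℕ => c - c / ((k:ℝ) + 2)) atTop (𝓝 (c - 0)) :=
      Tendsto.sub tendsto_const_nhds h6
    simpa [hεs] using h7
  exact le_of_tendsto htend (Filter.Eventually.of_forall hk)
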